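/- For d ≥ 2, the value of the (d-2)-nd iterated backward difference of χ̃ at x = d satisfies (D^{d-2}χ̃)(d)/(d-2)! = μ^{d-2}·[ (1/24)(d-1)d(d+1)(3d+10)μ² - (1/4)p(d-1)d(d+2)μ + (1/2)c̃₂ ], where c̃₂ = d²p²/4 - r(p-1)p(2p-1)/6 + r(r-1)a(3p²-3p+1)/12 - (r-1)r(2r-1)a²(p-1)/24 + r²(r-1)²a³/48. -/

import Mathlib

/-- Backward difference operator: `(D f)(x) = f x - f (x-1)`. -/
noncomputable def bdiff (f : ℝ → ℝ) : ℝ → ℝ := fun x => f x - f (x - 1)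

/-- `d = r(r-1)a/2 + rb + r`. -/
def dInv (r a b : ℕ) : ℕ := r * (r - 1) * a / 2 + r * b + r

/-- `p = (r-1)a + b + 2`. -/
def pInv (r a b : ℕ) : ℕ := (r - 1) * a + b + 2

/-- The function `χ̃(x) = ∏_{j=1}^r (μx - p + 1 + (j-1)a/2)_{1+b+(r-j)a}`. -/
noncomputable def chiF (r a b : ℕ) (μ : ℝ) : ℝ → ℝ := fun x =>
  ∏ j ∈ Finset.Icc 1 r,
    (ascPochhammer ℝ (1 + b + (r - j) * a)).eval
      (μ * x - (pInv r a b : ℝ) + 1 + ((j : ℝ) - 1) * a / 2)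

/-- `c̃₂` as a real number. -/
noncomputable def ctildeR (r a b : ℕ) : ℝ :=
  (dInv r a b : ℝ) ^ 2 * (pInv r a b : ℝ) ^ 2 / 4
    - (r : ℝ) * ((pInv r a b : ℝ) - 1) * (pInv r a b : ℝ) * (2 * (pInv r a b : ℝ) - 1) / 6
    + (r : ℝ) * ((r : ℝ) - 1) * (a : ℝ) *
        (3 * (pInv r a b : ℝ) ^ 2 - 3 * (pInv r a b : ℝ) + 1) / 12
    - ((r : ℝ) - 1) * (r : ℝ) * (2 * (r : ℝ) - 1) * (a : ℝ) ^ 2 * ((pInv r a b : ℝ) - 1) / 24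
    + (r : ℝ) ^ 2 * ((r : ℝ) - 1) ^ 2 * (a : ℝ) ^ 3 / 48

open Polynomial Finset

/-! ### Auxiliary material -/

noncomputable def deltaOp (μ : ℝ) (Q : ℝ[X]) : ℝ[X] := Q - Q.comp (X - C μ)

lemma bdiff_iterate (μ : ℝ) (k : ℕ) (Q : ℝ[X]) (x : ℝ) :
    bdiff^[k] (fun y => Q.eval (μ * y)) x = ((deltaOp μ)^[k] Q).eval (μ * x) := by
  induction k generalizing Q x with
  | zero => simp
  | succ k ih =>
    rw [Function.iterate_succ_apply, Function.iterate_succ_apply]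
    have h : bdiff (fun y => Q.eval (μ * y)) = fun y => (deltaOp μ Q).eval (μ * y) := by
      funext y
      simp only [bdiff, deltaOp, eval_sub, eval_comp, eval_X, eval_C]
      ring_nf
    rw [h, ih]

lemma natDegree_deltaOp_le (μ : ℝ) (Q : ℝ[X]) (m : ℕ) (hQ : Q.natDegree ≤ m + 1) :
    (deltaOp μ Q).natDegree ≤ m := by
  have hcomp : Q.comp (X - C μ) = taylor (-μ) Q := by
    rw [taylor_apply, map_neg, sub_eq_add_neg]
  rw [natDegree_le_iff_coeff_eq_zero]
  intro n hn
  rcases lt_or_ge Q.natDegree n with h | h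
  · have h2 : (Q.comp (X - C μ)).natDegree < n := by
      rwa [hcomp, natDegree_taylor]
    simp [deltaOp, coeff_sub, coeff_eq_zero_of_natDegree_lt h, coeff_eq_zero_of_natDegree_lt h2]
  · have hn' : n = Q.natDegree := le_antisymm h (by omega)
    have hH : (hasseDeriv n Q).natDegree = 0 := by
      have := natDegree_hasseDeriv_le Q n
      omega
    have : (Q.comp (X - C μ)).coeff n = Q.coeff n := by
      rw [hcomp, taylor_coeff, eq_C_of_natDegree_eq_zero hH, eval_C, hasseDeriv_coeff,
        Nat.zero_add, Nat.choose_self, Nat.cast_one, one_mul]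
    simp [deltaOp, coeff_sub, this]

lemma cubic_rep (R : ℝ[X]) (h : R.natDegree ≤ 3) :
    R = C (R.coeff 0) + C (R.coeff 1) * X + C (R.coeff 2) * X ^ 2 + C (R.coeff 3) * X ^ 3 := by
  have := R.as_sum_range' 4 (by omega)
  rw [this]
  simp [Finset.sum_range_succ, ← C_mul_X_pow_eq_monomial]

lemma cubic_taylor (μ : ℝ) (R : ℝ[X]) (h : R.natDegree ≤ 3) :
    deltaOp μ R =
      C μ * derivative^[1] R - C (μ ^ 2 / 2) * derivative^[2] R
        + C (μ ^ 3 / 6) * derivative^[3] R := by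
  unfold deltaOp
  obtain ⟨a, b, c, d, rfl⟩ : ∃ a b c d : ℝ,
      R = C a + C b * X + C c * X ^ 2 + C d * X ^ 3 :=
    ⟨_, _, _, _, cubic_rep R h⟩
  have e1 : derivative (C a + C b * X + C c * X ^ 2 + C d * X ^ 3 : ℝ[X]) =
      C b + C (2 * c) * X + C (3 * d) * X ^ 2 := by
    apply Polynomial.funext; intro x
    simp [derivative_X_pow]; ring
  have e2 : derivative^[2] (C a + C b * X + C c * X ^ 2 + C d * X ^ 3 : ℝ[X]) =
      C (2 * c) + C (6 * d) * X := by
    rw [Function.iterate_succ_apply', Function.iterate_one, e1]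
    apply Polynomial.funext; intro x
    simp [derivative_X_pow]; ring
  have e3 : derivative^[3] (C a + C b * X + C c * X ^ 2 + C d * X ^ 3 : ℝ[X]) = C (6 * d) := by
    rw [Function.iterate_succ_apply', e2]
    apply Polynomial.funext; intro x
    simp
  rw [Function.iterate_one, e1, e2, e3]
  apply Polynomial.funext; intro x
  simp [eval_comp]
  ring

lemma deltaOp_deriv_comm (μ : ℝ) (Q : ℝ[X]) (j : ℕ) :
    derivative^[j] (deltaOp μ Q) = deltaOp μ (derivative^[j] Q) := by
  induction j with
  | zero => rfl
  | succ j ih =>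
    rw [Function.iterate_succ_apply', ih, Function.iterate_succ_apply']
    unfold deltaOp
    rw [derivative_sub, derivative_comp]
    simp

lemma deltaOp_iterate (μ : ℝ) (k : ℕ) : ∀ Q : ℝ[X], Q.natDegree ≤ k + 2 →
    (deltaOp μ)^[k] Q = C (μ ^ k) * (derivative^[k] Q
      - C (k * μ / 2) * derivative^[k + 1] Q
      + C (k * (3 * k + 1) * μ ^ 2 / 24) * derivative^[k + 2] Q) := by
  induction k with
  | zero =>
    intro Q hQ
    simp
  | succ k ih =>
    intro Q hQ
    have hdeg : ∀ j, (derivative^[j] Q).natDegree ≤ k + 3 - j := fun j =>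
      (natDegree_iterate_derivative Q j).trans (by omega)
    rw [Function.iterate_succ_apply, ih (deltaOp μ Q) (natDegree_deltaOp_le μ Q _ (by omega)),
      deltaOp_deriv_comm, deltaOp_deriv_comm, deltaOp_deriv_comm,
      cubic_taylor μ _ ((hdeg k).trans (by omega)),
      cubic_taylor μ _ ((hdeg (k+1)).trans (by omega)),
      cubic_taylor μ _ ((hdeg (k+2)).trans (by omega))]
    simp only [← Function.iterate_add_apply]
    simp only [show 1 + k = k + 1 by omega, show 2 + k = k + 2 by omega,
      show 3 + k = k + 3 by omega, show 1 + (k + 1) = k + 2 by omega,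
      show 2 + (k + 1) = k + 3 by omega, show 3 + (k + 1) = k + 4 by omega,
      show 1 + (k + 2) = k + 3 by omega, show 2 + (k + 2) = k + 4 by omega,
      show 3 + (k + 2) = k + 5 by omega]
    rw [iterate_derivative_eq_zero (x := k + 4) (by omega),
      iterate_derivative_eq_zero (x := k + 5) (by omega)]
    apply Polynomial.funext; intro x
    simp only [eval_mul, eval_add, eval_sub, eval_C, eval_zero, mul_zero, zero_mul, sub_zero,
      add_zero, Nat.cast_succ]
    ring

lemma iter_deriv_add (n : ℕ) (p q : ℝ[X]) :
    derivative^[n] (p + q) = derivative^[n] p + derivative^[n] q := by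
  induction n generalizing p q with
  | zero => rfl
  | succ n ih => simp [Function.iterate_succ_apply, derivative_add, ih]

lemma leibniz_linear (c : ℝ) (k : ℕ) (v : ℝ[X]) :
    derivative^[k + 1] ((X - C c) * v) =
      (X - C c) * derivative^[k + 1] v + C ((k : ℝ) + 1) * derivative^[k] v := by
  induction k generalizing v with
  | zero =>
    simp [derivative_mul]
    ring
  | succ k ih =>
    rw [Function.iterate_succ_apply, derivative_mul]
    have h1 : derivative (X - C c) * v + (X - C c) * derivative v =
        (X - C c) * derivative v + v := by simp; ring
    rw [h1, iter_deriv_add, ih (derivative v), ← Function.iterate_succ_apply,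
      ← Function.iterate_succ_apply]
    apply Polynomial.funext; intro x
    simp only [eval_add, eval_mul, eval_sub, eval_C, eval_X, Nat.cast_succ]
    ring

section Items

variable {ι : Type*} [DecidableEq ι] (f : ι → ℝ)

omit [DecidableEq ι] in
lemma prod_natDegree (s : Finset ι) : (∏ m ∈ s, (X - C (f m))).natDegree = s.card := by
  rw [natDegree_prod_of_monic]
  · simp
  · exact fun i _ => monic_X_sub_C (f i)

lemma item1 (s : Finset ι) :
    derivative^[s.card] (∏ m ∈ s, (X - C (f m))) = C ((Nat.factorial s.card : ℕ) : ℝ) := by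
  induction s using Finset.induction with
  | empty => simp
  | insert a s ha ih =>
    rw [Finset.prod_insert ha, Finset.card_insert_of_notMem ha, leibniz_linear,
      iterate_derivative_eq_zero (by rw [prod_natDegree]; omega), ih]
    rw [mul_zero, zero_add, ← C_mul]
    congr 1
    rw [Nat.factorial_succ]
    push_cast
    ring

lemma item2 (k : ℕ) (s : Finset ι) (hs : s.card = k + 1) :
    derivative^[k] (∏ m ∈ s, (X - C (f m))) =
      C ((Nat.factorial k : ℕ) : ℝ) * ∑ m ∈ s, (X - C (f m)) := by
  induction s using Finset.induction generalizing k with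
  | empty => simp at hs
  | insert a s ha ih =>
    rw [Finset.card_insert_of_notMem ha] at hs
    rw [Finset.prod_insert ha, Finset.sum_insert ha]
    rcases k with _ | j
    · have hs0 : s = ∅ := Finset.card_eq_zero.mp (by omega)
      subst hs0
      simp
    · have hcard : s.card = j + 1 := by omega
      have e1 : derivative^[j + 1] (∏ m ∈ s, (X - C (f m))) =
          C ((Nat.factorial (j+1) : ℕ) : ℝ) := by
        have := item1 f s
        rwa [hcard] at this
      rw [leibniz_linear, e1, ih j hcard]
      apply Polynomial.funext; intro x
      simp only [eval_add, eval_mul, eval_sub, eval_C, eval_X, eval_finset_sum,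
        Nat.factorial_succ, Nat.cast_succ, Nat.cast_mul]
      ring

lemma item3 (k : ℕ) (s : Finset ι) (hs : s.card = k + 2) :
    derivative^[k] (∏ m ∈ s, (X - C (f m))) =
      C (((Nat.factorial k : ℕ) : ℝ) / 2) *
        ((∑ m ∈ s, (X - C (f m))) ^ 2 - ∑ m ∈ s, (X - C (f m)) ^ 2) := by
  induction s using Finset.induction generalizing k with
  | empty => simp at hs
  | insert a s ha ih =>
    rw [Finset.card_insert_of_notMem ha] at hs
    rw [Finset.prod_insert ha, Finset.sum_insert ha, Finset.sum_insert ha]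
    rcases k with _ | j
    · obtain ⟨c, hc⟩ : ∃ c, s = {c} := Finset.card_eq_one.mp (by omega)
      subst hc
      simp only [Finset.prod_singleton, Finset.sum_singleton, Function.iterate_zero_apply]
      apply Polynomial.funext; intro x
      simp only [eval_mul, eval_add, eval_sub, eval_C, eval_X, eval_pow, Nat.factorial_zero,
        Nat.cast_one, eval_one]
      ring
    · have hcard : s.card = j + 2 := by omega
      have e2 : derivative^[j + 1] (∏ m ∈ s, (X - C (f m))) =
          C ((Nat.factorial (j+1) : ℕ) : ℝ) * ∑ m ∈ s, (X - C (f m)) :=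
        item2 f (j+1) s (by omega)
      rw [leibniz_linear, e2, ih j hcard]
      apply Polynomial.funext; intro x
      simp only [eval_add, eval_mul, eval_sub, eval_C, eval_X, eval_finset_sum, eval_pow,
        Nat.factorial_succ, Nat.cast_succ, Nat.cast_mul]
      ring

end Items

/-! ### Explicit summation formulas -/

noncomputable def GG1 (a b p r : ℝ) (n : ℕ) : ℝ := (-1:ℝ)*(n:ℝ) + (1:ℝ)*p*(n:ℝ) + (-3/2:ℝ)*b*(n:ℝ) + (1:ℝ)*b*p*(n:ℝ) + (-1/2:ℝ)*b^2*(n:ℝ) + (1:ℝ)*a*(n:ℝ) + (1/2:ℝ)*a*(n:ℝ)^2 + (-1/2:ℝ)*a*p*(n:ℝ) + (-1/2:ℝ)*a*p*(n:ℝ)^2 + (3/4:ℝ)*a*b*(n:ℝ) + (1/4:ℝ)*a*b*(n:ℝ)^2 + (-1/4:ℝ)*a^2*(n:ℝ) + (-1/4:ℝ)*a^2*(n:ℝ)^2 + (-3/2:ℝ)*r*a*(n:ℝ) + (1:ℝ)*r*a*p*(n:ℝ) + (-1:ℝ)*r*a*b*(n:ℝ) + (3/4:ℝ)*r*a^2*(n:ℝ)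 + (1/4:ℝ)*r*a^2*(n:ℝ)^2 + (-1/2:ℝ)*r^2*a^2*(n:ℝ)

noncomputable def GG2 (a b p r : ℝ) (n : ℕ) : ℝ := (1:ℝ)*(n:ℝ) + (-2:ℝ)*p*(n:ℝ) + (1:ℝ)*p^2*(n:ℝ) + (13/6:ℝ)*b*(n:ℝ) + (-3:ℝ)*b*p*(n:ℝ) + (1:ℝ)*b*p^2*(n:ℝ) + (3/2:ℝ)*b^2*(n:ℝ) + (-1:ℝ)*b^2*p*(n:ℝ) + (1/3:ℝ)*b^3*(n:ℝ) + (-19/12:ℝ)*a*(n:ℝ) + (-7/12:ℝ)*a*(n:ℝ)^2 + (2:ℝ)*a*p*(n:ℝ) + (1:ℝ)*a*p*(n:ℝ)^2 + (-1/2:ℝ)*a*p^2*(n:ℝ) + (-1/2:ℝ)*a*p^2*(n:ℝ)^2 + (-9/4:ℝ)*a*b*(n:ℝ) + (-3/4:ℝ)*a*b*(n:ℝ)^2 + (3/2:ℝ)*a*b*p*(n:ℝ) + (1/2:ℝ)*a*b*p*(n:ℝ)^2 + (-3/4:ℝ)*a*b^2*(n:ℝ) + (-1/4:ℝ)*a*b^2*(n:ℝ)^2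 + (19/24:ℝ)*a^2*(n:ℝ) + (5/8:ℝ)*a^2*(n:ℝ)^2 + (1/12:ℝ)*a^2*(n:ℝ)^3 + (-1/2:ℝ)*a^2*p*(n:ℝ) + (-1/2:ℝ)*a^2*p*(n:ℝ)^2 + (13/24:ℝ)*a^2*b*(n:ℝ) + (3/8:ℝ)*a^2*b*(n:ℝ)^2 + (1/12:ℝ)*a^2*b*(n:ℝ)^3 + (-1/8:ℝ)*a^3*(n:ℝ) + (-7/48:ℝ)*a^3*(n:ℝ)^2 + (-1/24:ℝ)*a^3*(n:ℝ)^3 + (-1/48:ℝ)*a^3*(n:ℝ)^4 + (13/6:ℝ)*r*a*(n:ℝ) + (-3:ℝ)*r*a*p*(n:ℝ) + (1:ℝ)*r*a*p^2*(n:ℝ) + (3:ℝ)*r*a*b*(n:ℝ) + (-2:ℝ)*r*a*b*p*(n:ℝ) + (1:ℝ)*r*a*b^2*(n:ℝ) + (-9/4:ℝ)*r*a^2*(n:ℝ) + (-3/4:ℝ)*r*a^2*(n:ℝ)^2 + (3/2:ℝ)*r*a^2*p*(n:ℝ) + (1/2:ℝ)*r*a^2*p*(n:ℝ)^2 + (-3/2:ℝ)*r*a^2*b*(n:ℝ)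 + (-1/2:ℝ)*r*a^2*b*(n:ℝ)^2 + (13/24:ℝ)*r*a^3*(n:ℝ) + (3/8:ℝ)*r*a^3*(n:ℝ)^2 + (1/12:ℝ)*r*a^3*(n:ℝ)^3 + (3/2:ℝ)*r^2*a^2*(n:ℝ) + (-1:ℝ)*r^2*a^2*p*(n:ℝ) + (1:ℝ)*r^2*a^2*b*(n:ℝ) + (-3/4:ℝ)*r^2*a^3*(n:ℝ) + (-1/4:ℝ)*r^2*a^3*(n:ℝ)^2 + (1/3:ℝ)*r^3*a^3*(n:ℝ)

lemma sumF1 (a b p r : ℝ) (n : ℕ) :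
    ∑ i ∈ range n, ((1+b+(r-1-(i:ℝ))*a) * (p-1-(i:ℝ)*a/2)
      - (1+b+(r-1-(i:ℝ))*a)*((1+b+(r-1-(i:ℝ))*a)-1)/2) = GG1 a b p r n := by
  induction n with
  | zero => simp [GG1]
  | succ n ih =>
    rw [Finset.sum_range_succ, ih]
    simp only [GG1]
    push_cast
    ring

lemma sumF2 (a b p r : ℝ) (n : ℕ) :
    ∑ i ∈ range n, ((1+b+(r-1-(i:ℝ))*a) * (p-1-(i:ℝ)*a/2)^2
      - (p-1-(i:ℝ)*a/2) * (1+b+(r-1-(i:ℝ))*a) * ((1+b+(r-1-(i:ℝ))*a)-1)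
      + (1+b+(r-1-(i:ℝ))*a)*((1+b+(r-1-(i:ℝ))*a)-1)*(2*(1+b+(r-1-(i:ℝ))*a)-1)/6)
      = GG2 a b p r n := by
  induction n with
  | zero => simp [GG2]
  | succ n ih =>
    rw [Finset.sum_range_succ, ih]
    simp only [GG2]
    push_cast
    ring

lemma inner1 (c : ℝ) (n : ℕ) :
    ∑ i ∈ range n, (c - (i:ℝ)) = (n:ℝ)*c - (n:ℝ)*((n:ℝ)-1)/2 := by
  induction n with
  | zero => simp
  | succ n ih => rw [Finset.sum_range_succ, ih]; push_cast; ring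

lemma inner2 (c : ℝ) (n : ℕ) :
    ∑ i ∈ range n, (c - (i:ℝ))^2 =
      (n:ℝ)*c^2 - c*(n:ℝ)*((n:ℝ)-1) + (n:ℝ)*((n:ℝ)-1)*(2*(n:ℝ)-1)/6 := by
  induction n with
  | zero => simp
  | succ n ih => rw [Finset.sum_range_succ, ih]; push_cast; ring

/-! ### The root set -/

def TT (r a b : ℕ) : Finset ((_ : ℕ) × ℕ) :=
  (Finset.Icc 1 r).sigma (fun j => Finset.range (1 + b + (r - j) * a))

noncomputable def rho (r a b : ℕ) (m : (_ : ℕ) × ℕ) : ℝ :=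
  (pInv r a b : ℝ) - 1 - ((m.1 : ℝ) - 1) * (a : ℝ) / 2 - (m.2 : ℝ)

lemma two_dvd_r_pred (r : ℕ) : 2 ∣ r * (r - 1) := by
  rcases Nat.even_or_odd r with ⟨t, ht⟩ | ⟨t, ht⟩
  · exact ⟨t * (r - 1), by rw [ht]; ring⟩
  · exact ⟨r * t, by rw [show r - 1 = 2 * t by omega]; ring⟩

lemma sum_Icc_sub (r : ℕ) : ∑ j ∈ Finset.Icc 1 r, (r - j) = r * (r - 1) / 2 := by
  rw [← Finset.Ico_add_one_right_eq_Icc, Finset.sum_Ico_eq_sum_range]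
  simp only [Nat.succ_sub_one, Nat.add_sub_cancel]
  have h : ∀ i ∈ range r, r - (1 + i) = r - 1 - i := fun i _ => by omega
  rw [Finset.sum_congr rfl h, Finset.sum_range_reflect (fun i => i) r]
  exact Finset.sum_range_id r

lemma card_TT (r a b : ℕ) : (TT r a b).card = dInv r a b := by
  rw [TT, Finset.card_sigma]
  simp only [Finset.card_range]
  rw [Finset.sum_add_distrib, Finset.sum_add_distrib, ← Finset.sum_mul, sum_Icc_sub,
    Finset.sum_const, Finset.sum_const, Nat.card_Icc]
  obtain ⟨m, hm⟩ := two_dvd_r_pred r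
  have h1 : r * (r - 1) / 2 = m := by omega
  have h2 : r * (r - 1) * a / 2 = m * a := by
    rw [hm, mul_assoc]
    exact Nat.mul_div_cancel_left _ two_pos
  rw [h1, dInv, h2]
  simp [Nat.smul_one_eq_cast, smul_eq_mul]
  omega

lemma asc_eval_prod (n : ℕ) (y : ℝ) :
    (ascPochhammer ℝ n).eval y = ∏ i ∈ range n, (y + (i : ℝ)) := by
  induction n with
  | zero => simp
  | succ n ih => rw [ascPochhammer_succ_eval, ih, Finset.prod_range_succ]

lemma chiF_eq (r a b : ℕ) (μ : ℝ) (x : ℝ) :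
    chiF r a b μ x = (∏ m ∈ TT r a b, (X - C (rho r a b m))).eval (μ * x) := by
  rw [eval_prod, TT, Finset.prod_sigma]
  unfold chiF
  apply Finset.prod_congr rfl
  intro j _
  rw [asc_eval_prod]
  apply Finset.prod_congr rfl
  intro i _
  simp only [rho, eval_sub, eval_X, eval_C]
  ring

lemma S1_eq (r a b : ℕ) :
    ∑ m ∈ TT r a b, rho r a b m = GG1 (a:ℝ) (b:ℝ) (pInv r a b : ℝ) (r:ℝ) r := by
  rw [TT, Finset.sum_sigma]
  have h1 : ∀ j ∈ Finset.Icc 1 r,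
      ∑ i ∈ range (1 + b + (r - j) * a), rho r a b ⟨j, i⟩ =
        ((1+(b:ℝ)+((r:ℝ)-(j:ℝ))*(a:ℝ)) * ((pInv r a b : ℝ)-1-((j:ℝ)-1)*(a:ℝ)/2)
          - (1+(b:ℝ)+((r:ℝ)-(j:ℝ))*(a:ℝ))*((1+(b:ℝ)+((r:ℝ)-(j:ℝ))*(a:ℝ))-1)/2) := by
    intro j hj
    rw [Finset.mem_Icc] at hj
    have hc : ((1 + b + (r - j) * a : ℕ) : ℝ) = 1+(b:ℝ)+((r:ℝ)-(j:ℝ))*(a:ℝ) := by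
      push_cast [Nat.cast_sub hj.2]
      ring
    have := inner1 ((pInv r a b : ℝ)-1-((j:ℝ)-1)*(a:ℝ)/2) (1 + b + (r - j) * a)
    rw [hc] at this
    rw [← this]
    apply Finset.sum_congr rfl
    intro i _
    simp only [rho]
    try ring
  rw [Finset.sum_congr rfl h1, ← Finset.Ico_add_one_right_eq_Icc, Finset.sum_Ico_eq_sum_range]
  simp only [Nat.succ_sub_one, Nat.add_sub_cancel]
  rw [← sumF1 (a:ℝ) (b:ℝ) (pInv r a b : ℝ) (r:ℝ) r]
  apply Finset.sum_congr rfl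
  intro i _
  push_cast
  try ring

lemma S2_eq (r a b : ℕ) :
    ∑ m ∈ TT r a b, (rho r a b m)^2 = GG2 (a:ℝ) (b:ℝ) (pInv r a b : ℝ) (r:ℝ) r := by
  rw [TT, Finset.sum_sigma]
  have h1 : ∀ j ∈ Finset.Icc 1 r,
      ∑ i ∈ range (1 + b + (r - j) * a), (rho r a b ⟨j, i⟩)^2 =
        ((1+(b:ℝ)+((r:ℝ)-(j:ℝ))*(a:ℝ)) * ((pInv r a b : ℝ)-1-((j:ℝ)-1)*(a:ℝ)/2)^2
          - ((pInv r a b : ℝ)-1-((j:ℝ)-1)*(a:ℝ)/2)*(1+(b:ℝ)+((r:ℝ)-(j:ℝ))*(a:ℝ))*((1+(b:ℝ)+((r:ℝ)-(j:ℝ))*(a:ℝ))-1)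
          + (1+(b:ℝ)+((r:ℝ)-(j:ℝ))*(a:ℝ))*((1+(b:ℝ)+((r:ℝ)-(j:ℝ))*(a:ℝ))-1)*(2*(1+(b:ℝ)+((r:ℝ)-(j:ℝ))*(a:ℝ))-1)/6) := by
    intro j hj
    rw [Finset.mem_Icc] at hj
    have hc : ((1 + b + (r - j) * a : ℕ) : ℝ) = 1+(b:ℝ)+((r:ℝ)-(j:ℝ))*(a:ℝ) := by
      push_cast [Nat.cast_sub hj.2]
      ring
    have := inner2 ((pInv r a b : ℝ)-1-((j:ℝ)-1)*(a:ℝ)/2) (1 + b + (r - j) * a)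
    rw [hc] at this
    rw [← this]
    apply Finset.sum_congr rfl
    intro i _
    simp only [rho]
    try ring
  rw [Finset.sum_congr rfl h1, ← Finset.Ico_add_one_right_eq_Icc, Finset.sum_Ico_eq_sum_range]
  simp only [Nat.succ_sub_one, Nat.add_sub_cancel]
  rw [← sumF2 (a:ℝ) (b:ℝ) (pInv r a b : ℝ) (r:ℝ) r]
  apply Finset.sum_congr rfl
  intro i _
  push_cast
  try ring

theorem stmt10 (r a b : ℕ) (hr : 1 ≤ r) (μ : ℝ) (hμ : 0 < μ) (hd : 2 ≤ dInv r a b) :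
    bdiff^[dInv r a b - 2] (chiF r a b μ) (dInv r a b : ℝ) /
        (Nat.factorial (dInv r a b - 2) : ℝ) =
      μ ^ (dInv r a b - 2) *
        (1 / 24 * ((dInv r a b : ℝ) - 1) * (dInv r a b : ℝ) * ((dInv r a b : ℝ) + 1) *
            (3 * (dInv r a b : ℝ) + 10) * μ ^ 2
          - 1 / 4 * (pInv r a b : ℝ) * ((dInv r a b : ℝ) - 1) * (dInv r a b : ℝ) *
              ((dInv r a b : ℝ) + 2) * μ
          + 1 / 2 * ctildeR r a b) := by
  obtain ⟨k, hk⟩ : ∃ k, dInv r a b = k + 2 := ⟨dInv r a b - 2, by omega⟩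
  have hcard : (TT r a b).card = k + 2 := by rw [card_TT]; omega
  have hchi : chiF r a b μ = fun y => (∏ m ∈ TT r a b, (X - C (rho r a b m))).eval (μ * y) :=
    funext (chiF_eq r a b μ)
  have hdeg : (∏ m ∈ TT r a b, (X - C (rho r a b m))).natDegree = k + 2 := by
    rw [prod_natDegree, hcard]
  have hk2 : dInv r a b - 2 = k := by omega
  have e1 : derivative^[k+2] (∏ m ∈ TT r a b, (X - C (rho r a b m))) =
      C ((Nat.factorial (k+2) : ℕ) : ℝ) := by
    have := item1 (rho r a b) (TT r a b)
    rwa [hcard] at this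
  rw [hchi, hk2, bdiff_iterate, deltaOp_iterate μ k _ (le_of_eq hdeg),
    item3 (rho r a b) k (TT r a b) hcard, item2 (rho r a b) (k+1) (TT r a b) (by omega), e1]
  simp only [eval_mul, eval_add, eval_sub, eval_C, eval_pow, eval_finset_sum, eval_X]
  have hs1 : ∑ m ∈ TT r a b, (μ * (dInv r a b : ℝ) - rho r a b m) =
      ((k:ℝ)+2) * (μ * (dInv r a b : ℝ)) - GG1 (a:ℝ) (b:ℝ) (pInv r a b : ℝ) (r:ℝ) r := by
    rw [Finset.sum_sub_distrib, Finset.sum_const, hcard, S1_eq, nsmul_eq_mul]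
    push_cast
    ring
  have hs2 : ∑ m ∈ TT r a b, (μ * (dInv r a b : ℝ) - rho r a b m)^2 =
      ((k:ℝ)+2) * (μ * (dInv r a b : ℝ))^2
        - 2 * (μ * (dInv r a b : ℝ)) * GG1 (a:ℝ) (b:ℝ) (pInv r a b : ℝ) (r:ℝ) r
        + GG2 (a:ℝ) (b:ℝ) (pInv r a b : ℝ) (r:ℝ) r := by
    have hpt : ∀ m ∈ TT r a b, (μ * (dInv r a b : ℝ) - rho r a b m)^2 =
        (μ * (dInv r a b : ℝ))^2 - 2 * (μ * (dInv r a b : ℝ)) * rho r a b m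
          + (rho r a b m)^2 := fun m _ => by ring
    rw [Finset.sum_congr rfl hpt, Finset.sum_add_distrib, Finset.sum_sub_distrib,
      Finset.sum_const, hcard, ← Finset.mul_sum, S1_eq, S2_eq, nsmul_eq_mul]
    push_cast
    ring
  rw [hs1, hs2]
  have hP : (pInv r a b : ℝ) = ((r:ℝ)-1)*(a:ℝ) + (b:ℝ) + 2 := by
    rw [pInv]
    push_cast [Nat.cast_sub hr]
    ring
  obtain ⟨m, hm⟩ := two_dvd_r_pred r
  have hmr : (r:ℝ)*((r:ℝ)-1) = 2*(m:ℝ) := by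
    have h := congrArg (fun n : ℕ => (n:ℝ)) hm
    push_cast [Nat.cast_sub hr] at h
    linarith
  have hD : (dInv r a b : ℝ) = (r:ℝ)*((r:ℝ)-1)*(a:ℝ)/2 + (r:ℝ)*(b:ℝ) + (r:ℝ) := by
    rw [dInv]
    have h2 : r*(r-1)*a/2 = m*a := by
      rw [hm, mul_assoc]
      exact Nat.mul_div_cancel_left _ two_pos
    rw [h2]
    push_cast
    linear_combination (-(a:ℝ)/2) * hmr
  have hKD : (k:ℝ) = (dInv r a b : ℝ) - 2 := by rw [hk]; push_cast; ring
  have hfac : ((Nat.factorial k : ℕ):ℝ) ≠ 0 := Nat.cast_ne_zero.mpr (Nat.factorial_ne_zero k)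
  have hf2 : ((Nat.factorial (k+2) : ℕ):ℝ) = ((k:ℝ)+2)*((k:ℝ)+1)*((Nat.factorial k : ℕ):ℝ) := by
    rw [Nat.factorial_succ, Nat.factorial_succ]
    push_cast
    ring
  have hf1 : ((Nat.factorial (k+1) : ℕ):ℝ) = ((k:ℝ)+1)*((Nat.factorial k : ℕ):ℝ) := by
    rw [Nat.factorial_succ]
    push_cast
    ring
  rw [hf2, hf1]
  simp only [GG1, GG2, ctildeR]
  rw [div_eq_iff hfac]
  rw [hKD, hP, hD]
  ring
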